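/- arXiv:1806.07625 — 3 statements merged into one kernel-verified Lean document; each statement's English description precedes it below -/
import Mathlib

section
/- Let N be a rooted phylogenetic network over X and let u be a tree node in an exposed tree-node component τ (only leaves, isolated reticulate nodes, and redundant nodes occur strictly below τ). Then a subset S ⊆ X is displayed as a softwired cluster at u if and only if (i) every leaf in S is below u, and (ii) no leaf outside S is dominated by u. -/
open Relation

variable {V : Type*}

/-- Indegree of a node in a digraph given by an edge relation. -/
noncomputable def indeg (E : V → V → Prop) (v : V) : ℕ := Set.ncard {u | E u v}

/-- Outdegree of a node in a digraph given by an edge relation. -/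
noncomputable def outdeg (E : V → V → Prop) (v : V) : ℕ := Set.ncard {w | E v w}

/-- A directed path from `x` to `y` in the digraph `E`, recorded as the list of its nodes. -/
def IsDirPathE (E : V → V → Prop) (x y : V) (p : List V) : Prop :=
  p.head? = some x ∧ p.getLast? = some y ∧ p.Chain' E

/-- `Dom E root x y`: `x` is a dominator of `y`, i.e. `x` is an ancestor of `y` and every
directed path from `root` to `y` contains `x`. -/
def Dom (E : V → V → Prop) (root x y : V) : Prop :=
  Relation.TransGen E x y ∧ ∀ p, IsDirPathE E root y p → x ∈ p

/-- A rooted phylogenetic network: a rooted acyclic digraph with a unique root of indegree 0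
and outdegree ≥ 1, in which every non-root node has indegree 1 or outdegree 1, and every node
is reachable from the root. -/
structure RPN (V : Type*) [Fintype V] where
  E : V → V → Prop
  root : V
  acyclic : ∀ v, ¬ Relation.TransGen E v v
  root_indeg : indeg E root = 0
  root_outdeg : 1 ≤ outdeg E root
  degree_cond : ∀ v, v ≠ root → indeg E v = 1 ∨ outdeg E v = 1
  reachable : ∀ v, Relation.ReflTransGen E root v

namespace RPN

variable [Fintype V] (N : RPN V)

/-- A leaf: indegree 1 and outdegree 0. -/
def isLeaf (v : V) : Prop := indeg N.E v = 1 ∧ outdeg N.E v = 0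

/-- A reticulate node: indegree at least 2. -/
def isRetic (v : V) : Prop := 2 ≤ indeg N.E v

/-- A tree node: the root, or a node of indegree 1 and outdegree at least 2. -/
def isTreeN (v : V) : Prop := v = N.root ∨ (indeg N.E v = 1 ∧ 2 ≤ outdeg N.E v)

/-- A redundant node: indegree 1 and outdegree 1. -/
def isRedund (v : V) : Prop := indeg N.E v = 1 ∧ outdeg N.E v = 1

/-- A directed path from `x` to `y` in `N`. -/
def IsDirPath (x y : V) (p : List V) : Prop := IsDirPathE N.E x y p

/-- `x` lies on every directed path from the root to `y`. -/
def Dominates (x y : V) : Prop := ∀ p, N.IsDirPath N.root y p → x ∈ p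

/-- A node is visible if it lies on every root-to-`ℓ` path for some leaf `ℓ`. -/
def Visible (x : V) : Prop := ∃ ℓ, N.isLeaf ℓ ∧ N.Dominates x ℓ

/-- Tree-child: every non-leaf node has a child that is a leaf, a tree node, or a redundant
node. -/
def TreeChild : Prop :=
  ∀ u, ¬ N.isLeaf u → ∃ c, N.E u c ∧ (N.isLeaf c ∨ N.isTreeN c ∨ N.isRedund c)

/-- Edge of the subgraph induced by the tree nodes. -/
def treeE (u v : V) : Prop := N.E u v ∧ N.isTreeN u ∧ N.isTreeN v

/-- Undirected adjacency in the subgraph induced by the tree nodes. -/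
def treeAdj (u v : V) : Prop := N.isTreeN u ∧ N.isTreeN v ∧ (N.E u v ∨ N.E v u)

/-- The tree-node component of a tree node `u`. -/
def treeComp (u : V) : Set V := {v | Relation.ReflTransGen N.treeAdj u v}

/-- Edge of the subgraph induced by the reticulate nodes. -/
def reticE (u v : V) : Prop := N.E u v ∧ N.isRetic u ∧ N.isRetic v

/-- Undirected adjacency in the subgraph induced by the reticulate nodes. -/
def reticAdj (u v : V) : Prop := N.isRetic u ∧ N.isRetic v ∧ (N.E u v ∨ N.E v u)

/-- The reticulation component of a reticulate node `u`. -/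
def reticComp (u : V) : Set V := {v | Relation.ReflTransGen N.reticAdj u v}

open Classical in
/-- The compression quotient map: each tree node is sent to its tree-node component, each
reticulate node to its reticulation component, and every other node to itself (as a
singleton set). -/
noncomputable def comp (u : V) : Set V :=
  if N.isTreeN u then N.treeComp u else if N.isRetic u then N.reticComp u else {u}

/-- Edge relation of the compression `N̄`: an edge between the (distinct) images of the
endpoints of each edge of `N`. -/
def compE (A B : Set V) : Prop :=
  A ≠ B ∧ ∃ u v, N.E u v ∧ N.comp u = A ∧ N.comp v = B

/-- `N` is binary: reticulate nodes have indegree exactly 2, tree nodes outdegree exactly 2. -/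
def Binary : Prop :=
  (∀ v, N.isRetic v → indeg N.E v = 2) ∧ (∀ v, N.isTreeN v → outdeg N.E v = 2)

/-- `N` is galled: every reticulate node `r` has a tree-node ancestor `w` with two internally
disjoint directed paths from `w` to `r` in which all nodes except `r` are tree nodes. -/
def Galled : Prop :=
  ∀ r, N.isRetic r → ∃ w p q, N.isTreeN w ∧
    N.IsDirPath w r p ∧ N.IsDirPath w r q ∧ p ≠ q ∧
    (∀ x ∈ p.tail.dropLast, x ∉ q.tail.dropLast) ∧
    (∀ x ∈ p, x ≠ r → N.isTreeN x) ∧ (∀ x ∈ q, x ≠ r → N.isTreeN x)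

/-- The spanning subgraph determined by a switching `s` choosing one parent of each
reticulate node. -/
def SpanE (s : V → V) (u v : V) : Prop := N.E u v ∧ (N.isRetic v → u = s v)

/-- `S` is displayed (as a softwired cluster) at `u`: for some switching, the set of leaves
below `u` in the resulting spanning tree is exactly `S`. -/
def DisplayedAt (S : Set V) (u : V) : Prop :=
  ∃ s : V → V, (∀ v, N.isRetic v → N.E (s v) v) ∧
    {ℓ | N.isLeaf ℓ ∧ Relation.ReflTransGen (N.SpanE s) u ℓ} = S

/-- An isolated reticulate node: neither its parents nor its child are reticulate. -/
def IsolatedRetic (w : V) : Prop :=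
  N.isRetic w ∧ (∀ x, N.E x w → ¬ N.isRetic x) ∧ (∀ y, N.E w y → ¬ N.isRetic y)

end RPN

section PathAux
variable {E E' : V → V → Prop} {a b c u : V} {l : List V}

lemma mem_of_head? (h : l.head? = some a) : a ∈ l := by
  cases l with
  | nil => simp at h
  | cons x t => simp at h; simp [h]

lemma mem_of_getLast? (h : l.getLast? = some a) : a ∈ l := by
  induction l with
  | nil => simp at h
  | cons x t ih =>
    cases t with
    | nil => simp at h; simp [h]
    | cons y s =>
      rw [List.getLast?_cons_cons] at h
      exact List.mem_cons_of_mem _ (ih h)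

lemma path_singleton (E : V → V → Prop) (a : V) : IsDirPathE E a a [a] := by
  refine ⟨rfl, rfl, ?_⟩; exact List.isChain_singleton _

lemma path_snoc (h : IsDirPathE E a b l) (he : E b c) : IsDirPathE E a c (l ++ [c]) := by
  obtain ⟨h1, h2, h3⟩ := h
  have hl : l ≠ [] := by rintro rfl; simp at h1
  refine ⟨?_, List.getLast?_concat, ?_⟩
  · rw [List.head?_append]; rw [h1]; rfl
  · rw [List.Chain', List.isChain_append]
    refine ⟨h3, by simp, ?_⟩
    intro x hx y hy
    simp at hy; subst hy
    rw [h2] at hx; simp at hx; subst hx; exact he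

lemma path_decomp (h : IsDirPathE E a b l) :
    a = b ∨ ∃ l' c, IsDirPathE E a c l' ∧ E c b ∧ l = l' ++ [b] := by
  obtain ⟨h1, h2, h3⟩ := h
  have hl : l ≠ [] := by rintro rfl; simp at h1
  obtain ⟨l', x, rfl⟩ := List.eq_nil_or_concat l |>.resolve_left hl
  simp only [List.concat_eq_append] at h1 h2 h3 ⊢
  have hx : x = b := by rw [List.getLast?_concat] at h2; exact Option.some_injective _ h2
  subst hx
  cases l' with
  | nil => left; simp at h1; exact h1.symm
  | cons y t =>
    right
    rw [List.Chain', List.isChain_append] at h3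
    obtain ⟨hc1, _, hc3⟩ := h3
    have hne : (y :: t : List V) ≠ [] := by simp
    obtain ⟨c, hc⟩ : ∃ c, (y :: t).getLast? = some c :=
      ⟨(y :: t).getLast hne, List.getLast?_eq_getLast hne⟩
    refine ⟨y :: t, c, ⟨?_, hc, hc1⟩, hc3 c hc x rfl, rfl⟩
    rw [List.head?_append] at h1; simpa using h1

lemma path_to_rtg (h : IsDirPathE E a b l) : ReflTransGen E a b := by
  induction l generalizing a with
  | nil => simp [IsDirPathE] at h
  | cons x t ih =>
    obtain ⟨h1, h2, h3⟩ := h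
    simp at h1; subst h1
    cases t with
    | nil => simp at h2; subst h2; exact .refl
    | cons y s =>
      rw [List.Chain', List.isChain_cons_cons] at h3
      rw [List.getLast?_cons_cons] at h2
      exact ReflTransGen.head h3.1 (ih ⟨rfl, h2, h3.2⟩)

lemma path_suffix (h : IsDirPathE E a b l) (hu : u ∈ l) : ∃ l', IsDirPathE E u b l' := by
  obtain ⟨s, t, rfl⟩ := List.append_of_mem hu
  obtain ⟨h1, h2, h3⟩ := h
  refine ⟨u :: t, rfl, ?_, (List.isChain_append.mp h3).2.1⟩
  rw [List.getLast?_append_of_ne_nil s (l₂ := u :: t) (by simp)] at h2; exact h2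

lemma path_mono (himp : ∀ x y, E x y → E' x y) (h : IsDirPathE E a b l) :
    IsDirPathE E' a b l :=
  ⟨h.1, h.2.1, h.2.2.imp himp⟩

lemma rtg_ne {r : V → V → Prop} (h : ReflTransGen r a b) (hne : a ≠ b) : TransGen r a b := by
  rcases h.cases_tail with rfl | ⟨c', h1, h2⟩
  · exact absurd rfl hne
  · exact TransGen.tail' h1 h2

end PathAux

section RPNAux
variable [Fintype V] (N : RPN V)

lemma aux_no_parent_root (x : V) : ¬ N.E x N.root := by
  intro h
  have h0 : ({u | N.E u N.root} : Set V) = ∅ :=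
    (Set.ncard_eq_zero (Set.toFinite _)).mp N.root_indeg
  have : x ∈ ({u | N.E u N.root} : Set V) := h
  rw [h0] at this; exact this

lemma aux_exists_parent {v : V} (h : v ≠ N.root) : ∃ p, N.E p v := by
  obtain ⟨b, _, hb⟩ := TransGen.tail'_iff.mp (rtg_ne (N.reachable v) (Ne.symm h))
  exact ⟨b, hb⟩

lemma aux_indeg_one {v : V} (hv : v ≠ N.root) (hnr : ¬ N.isRetic v) : indeg N.E v = 1 := by
  obtain ⟨p, hp⟩ := aux_exists_parent N hv
  have h1 : 0 < indeg N.E v := (Set.ncard_pos (Set.toFinite _)).mpr ⟨p, hp⟩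
  have h2 : ¬ 2 ≤ indeg N.E v := hnr
  omega

lemma aux_parent_unique {v p q : V} (h : indeg N.E v = 1) (hp : N.E p v) (hq : N.E q v) :
    p = q := by
  obtain ⟨a, ha⟩ := Set.ncard_eq_one.mp h
  have h1 : p ∈ ({a} : Set V) := ha ▸ hp
  have h2 : q ∈ ({a} : Set V) := ha ▸ hq
  simp at h1 h2; rw [h1, h2]

lemma aux_no_child {v : V} (h : outdeg N.E v = 0) (w : V) : ¬ N.E v w := by
  intro hw
  have h0 : ({w | N.E v w} : Set V) = ∅ := (Set.ncard_eq_zero (Set.toFinite _)).mp h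
  have : w ∈ ({w | N.E v w} : Set V) := hw
  rw [h0] at this; exact this

lemma aux_child_unique {v c w : V} (h : outdeg N.E v = 1) (hc : N.E v c) (hw : N.E v w) :
    c = w := by
  obtain ⟨a, ha⟩ := Set.ncard_eq_one.mp h
  have h1 : c ∈ ({a} : Set V) := ha ▸ hc
  have h2 : w ∈ ({a} : Set V) := ha ▸ hw
  simp at h1 h2; rw [h1, h2]

lemma aux_retic_ne_root {v : V} (h : N.isRetic v) : v ≠ N.root := by
  rintro rfl
  have := N.root_indeg
  have h2 : 2 ≤ indeg N.E N.root := h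
  omega

lemma aux_retic_parent {v : V} (h : N.isRetic v) : ∃ p, N.E p v :=
  aux_exists_parent N (aux_retic_ne_root N h)

lemma aux_retic_outdeg {v : V} (h : N.isRetic v) : outdeg N.E v = 1 := by
  rcases N.degree_cond v (aux_retic_ne_root N h) with h1 | h1
  · have h2 : 2 ≤ indeg N.E v := h; omega
  · exact h1

lemma aux_wf : WellFounded (fun a b : V => N.E a b) := by
  have h1 : IsTrans V (TransGen N.E) := ⟨fun _ _ _ => TransGen.trans⟩
  have h2 : IsIrrefl V (TransGen N.E) := ⟨N.acyclic⟩
  exact Subrelation.wf (fun h => TransGen.single h) (Finite.wellFounded_of_trans_of_irrefl _)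

lemma aux_dom_self (u : V) : N.Dominates u u := fun _ hp => mem_of_getLast? hp.2.1

lemma aux_dom_root (t : V) : N.Dominates N.root t := fun _ hp => mem_of_head? hp.1

lemma aux_dom_of_parents {u w : V} (hw : w ≠ N.root)
    (h : ∀ p, N.E p w → N.Dominates u p) : N.Dominates u w := by
  intro l hl
  rcases path_decomp hl with heq | ⟨l', c, hl', hc, rfl⟩
  · exact absurd heq.symm hw
  · exact List.mem_append_left _ (h c hc l' hl')

lemma aux_tree_outdeg {v : V} (h : N.isTreeN v) : 1 ≤ outdeg N.E v := by
  rcases h with h | h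
  · rw [h]; exact N.root_outdeg
  · omega

lemma aux_tree_ne_leaf {v w : V} (hv : N.isTreeN v) (hw : N.isLeaf w) : v ≠ w := by
  rintro rfl
  have h1 := aux_tree_outdeg N hv
  have h2 := hw.2
  omega

lemma aux_mem_treeComp_tree {u x : V} (hu : N.isTreeN u) (h : x ∈ N.treeComp u) :
    N.isTreeN x := by
  rcases (show ReflTransGen N.treeAdj u x from h).cases_tail with heq | ⟨c, _, hadj⟩
  · rw [heq]; exact hu
  · exact hadj.2.1

lemma aux_common_anc {u t : V} (h : Relation.ReflTransGen N.treeAdj u t) :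
    ∃ z, ReflTransGen N.treeE z u ∧ ReflTransGen N.treeE z t := by
  induction h with
  | refl => exact ⟨u, .refl, .refl⟩
  | @tail b c h1 hadj ih =>
    obtain ⟨z, hzu, hzb⟩ := ih
    obtain ⟨hb, hc, hor⟩ := hadj
    rcases hor with hE | hE
    · exact ⟨z, hzu, hzb.tail ⟨hE, hb, hc⟩⟩
    · have hbroot : b ≠ N.root := fun hr => aux_no_parent_root N c (hr ▸ hE)
      have hbind : indeg N.E b = 1 := by
        rcases hb with hr | ⟨hi, _⟩
        · exact absurd hr hbroot
        · exact hi
      rcases hzb.cases_tail with heq | ⟨d, hzd, hdb⟩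
      · subst heq
        exact ⟨c, ReflTransGen.head ⟨hE, hc, hb⟩ hzu, .refl⟩
      · have hd : d = c := aux_parent_unique N hbind hdb.1 hE
        subst hd
        exact ⟨z, hzu, hzd⟩

lemma aux_d3 {u z t : V} (h1 : ReflTransGen N.treeE z t) :
    ReflTransGen N.E u t → ReflTransGen N.treeE u t ∨ ReflTransGen N.E u z := by
  induction h1 with
  | refl => intro h; right; exact h
  | @tail b c hzb hbc ih =>
    intro h
    by_cases huc : u = c
    · left; rw [huc]
    · have hcroot : c ≠ N.root := fun hr => aux_no_parent_root N b (hr ▸ hbc.1)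
      have hcind : indeg N.E c = 1 := by
        rcases hbc.2.2 with hr | ⟨hi, _⟩
        · exact absurd hr hcroot
        · exact hi
      obtain ⟨d, hud, hdc⟩ := TransGen.tail'_iff.mp (rtg_ne h huc)
      have hd : d = b := aux_parent_unique N hcind hdc hbc.1
      subst hd
      rcases ih hud with hl | hr
      · left; exact hl.tail hbc
      · right; exact hr

lemma aux_d1 {u t : V} (h : ReflTransGen N.treeE u t) : N.Dominates u t := by
  induction h with
  | refl => exact aux_dom_self N u
  | @tail b c h1 hbc ih =>
    have hcroot : c ≠ N.root := fun hr => aux_no_parent_root N b (hr ▸ hbc.1)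
    have hcind : indeg N.E c = 1 := by
      rcases hbc.2.2 with hr | ⟨hi, _⟩
      · exact absurd hr hcroot
      · exact hi
    apply aux_dom_of_parents N hcroot
    intro p hp
    have hpb : p = b := aux_parent_unique N hcind hp hbc.1
    rw [hpb]; exact ih

lemma aux_key {u t : V} (hu : N.isTreeN u)
    (hexp : ∀ w, (∃ t' ∈ N.treeComp u, Relation.TransGen N.E t' w) → w ∉ N.treeComp u →
      N.isLeaf w ∨ N.IsolatedRetic w ∨ N.isRedund w)
    (ht : N.isTreeN t) (hB : ReflTransGen N.E u t) : N.Dominates u t := by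
  by_cases hur : u = N.root
  · rw [hur]; exact aux_dom_root N t
  by_cases htu : t = u
  · rw [htu]; exact aux_dom_self N u
  have htrans : TransGen N.E u t := rtg_ne hB (Ne.symm htu)
  have htroot : t ≠ N.root := by
    rintro rfl
    exact N.acyclic u (htrans.trans (rtg_ne (N.reachable u) (fun h => hur h.symm)))
  have hτ : t ∈ N.treeComp u := by
    by_contra hnot
    rcases hexp t ⟨u, ReflTransGen.refl, htrans⟩ hnot with hl | hi | hr
    · rcases ht with h | h
      · exact htroot h
      · have := hl.2; omega
    · rcases ht with h | h
      · exact htroot h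
      · have h2 : 2 ≤ indeg N.E t := hi.1
        omega
    · rcases ht with h | h
      · exact htroot h
      · have := hr.2; omega
  obtain ⟨z, hzu, hzt⟩ := aux_common_anc N hτ
  rcases aux_d3 N hzt hB with h | h
  · exact aux_d1 N h
  · by_cases hzu' : z = u
    · rw [← hzu']; exact aux_d1 N hzt
    · exfalso
      have h1 : TransGen N.E u z := rtg_ne h (fun he => hzu' he.symm)
      have h2 : TransGen N.E z u := rtg_ne (ReflTransGen.mono (fun _ _ e => e.1) _ _ hzu) hzu'
      exact N.acyclic u (h1.trans h2)

end RPNAux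
/-- Auxiliary reachability predicate used to define a suitable switching. -/
inductive Reach {V : Type*} [Fintype V] (N : RPN V) (u : V) (S : Set V) : V → Prop
  | base : Reach N u S u
  | step {x y : V} : Reach N u S x → N.E x y → ¬ N.isRetic y → Reach N u S y
  | ron {x y : V} : Reach N u S x → N.E x y → N.isRetic y →
      (∃ ℓ ∈ S, Relation.ReflTransGen N.E y ℓ) → Reach N u S y
  | off {y : V} : N.isRetic y → (∃ x, N.E x y) → (∀ x, N.E x y → Reach N u S x) →
      Reach N u S y

section ReachAux
variable [Fintype V] (N : RPN V) (u : V) (S : Set V)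

lemma reach_below {x : V} (h : Reach N u S x) : ReflTransGen N.E u x := by
  induction h with
  | base => exact .refl
  | step _ hE _ ih => exact ih.tail hE
  | ron _ hE _ _ ih => exact ih.tail hE
  | off _ hex _ ih =>
    obtain ⟨x', hx'⟩ := hex
    exact (ih x' hx').tail hx'

open Classical in
/-- The switching. -/
noncomputable def sw : V → V := fun v =>
  if h1 : (∃ ℓ ∈ S, Relation.ReflTransGen N.E v ℓ) ∧ ∃ p, N.E p v ∧ Reach N u S p then
    h1.2.choose
  else if h2 : ∃ p, N.E p v ∧ ¬ Reach N u S p then h2.choose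
  else if h3 : ∃ p, N.E p v then h3.choose
  else v

lemma sw_parent {v : V} (hv : ∃ p, N.E p v) : N.E (sw N u S v) v := by
  unfold sw
  split_ifs with h1 h2
  · exact h1.2.choose_spec.1
  · exact h2.choose_spec.1
  · exact hv.choose_spec

lemma sw_reach {v : V} (h1 : ∃ ℓ ∈ S, Relation.ReflTransGen N.E v ℓ)
    (h2 : ∃ p, N.E p v ∧ Reach N u S p) :
    Reach N u S (sw N u S v) ∧ N.E (sw N u S v) v := by
  unfold sw
  rw [dif_pos ⟨h1, h2⟩]
  exact ⟨(⟨h1, h2⟩ : _ ∧ _).2.choose_spec.2, (⟨h1, h2⟩ : _ ∧ _).2.choose_spec.1⟩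

lemma sw_off {v : V} (h1 : ¬ ((∃ ℓ ∈ S, Relation.ReflTransGen N.E v ℓ) ∧
      ∃ p, N.E p v ∧ Reach N u S p))
    (h2 : ∃ p, N.E p v ∧ ¬ Reach N u S p) : ¬ Reach N u S (sw N u S v) := by
  unfold sw
  rw [dif_neg h1, dif_pos h2]
  exact h2.choose_spec.2

lemma span_to_reach {x : V} (h : ReflTransGen (N.SpanE (sw N u S)) u x) :
    Reach N u S x := by
  induction h with
  | refl => exact .base
  | @tail b c h1 h2 ih =>
    obtain ⟨hE, hcond⟩ := h2
    by_cases hr : N.isRetic c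
    · by_cases hl : ∃ ℓ ∈ S, Relation.ReflTransGen N.E c ℓ
      · exact .ron ih hE hr hl
      · have hall : ∀ p, N.E p c → Reach N u S p := by
          intro p hp
          by_contra hnp
          have hno := sw_off N u S (fun hc' => hl hc'.1) ⟨p, hp, hnp⟩
          rw [← hcond hr] at hno
          exact hno ih
        exact .off hr ⟨b, hE⟩ hall
    · exact .step ih hE hr

lemma reach_to_span {x : V} (h : Reach N u S x) :
    ReflTransGen (N.SpanE (sw N u S)) u x := by
  induction x using WellFounded.induction (aux_wf N) with
  | _ x IH =>
  cases h with
  | base => exact .refl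
  | @step z _ hz hE hnr =>
    exact (IH z hE hz).tail ⟨hE, fun hr => absurd hr hnr⟩
  | @ron z _ hz hE hr hl =>
    obtain ⟨hR, hE'⟩ := sw_reach N u S hl ⟨z, hE, hz⟩
    exact (IH _ hE' hR).tail ⟨hE', fun _ => rfl⟩
  | off hr hex hall =>
    have hE' : N.E (sw N u S x) x := sw_parent N u S hex
    exact (IH _ hE' (hall _ hE')).tail ⟨hE', fun _ => rfl⟩

lemma reach_of_S {y : V} (h : ReflTransGen N.E u y) :
    (∃ ℓ ∈ S, Relation.ReflTransGen N.E y ℓ) → Reach N u S y := by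
  induction h with
  | refl => intro _; exact .base
  | @tail b c h1 h2 ih =>
    rintro ⟨ℓ, hℓ, hr⟩
    have hz : Reach N u S b := ih ⟨ℓ, hℓ, ReflTransGen.head h2 hr⟩
    by_cases hret : N.isRetic c
    · exact .ron hz h2 hret ⟨ℓ, hℓ, hr⟩
    · exact .step hz h2 hret

lemma span_root_path (s : V → V) (hs : ∀ v, N.isRetic v → N.E (s v) v) (v : V) :
    ∃ p, IsDirPathE (N.SpanE s) N.root v p := by
  induction v using WellFounded.induction (aux_wf N) with
  | _ v IH =>
  by_cases hv : v = N.root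
  · rw [hv]; exact ⟨[N.root], path_singleton _ _⟩
  · obtain ⟨q, hq, hspan⟩ : ∃ q, N.E q v ∧ N.SpanE s q v := by
      by_cases hr : N.isRetic v
      · exact ⟨s v, hs v hr, hs v hr, fun _ => rfl⟩
      · obtain ⟨q, hq⟩ := aux_exists_parent N hv
        exact ⟨q, hq, hq, fun h => absurd h hr⟩
    obtain ⟨p, hp⟩ := IH q hq
    exact ⟨p ++ [v], path_snoc hp hspan⟩

end ReachAux
section MainClaim
variable [Fintype V] (N : RPN V)

lemma reach_dom {u : V} {S : Set V} (hu : N.isTreeN u)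
    (hexp : ∀ w, (∃ t ∈ N.treeComp u, Relation.TransGen N.E t w) → w ∉ N.treeComp u →
      N.isLeaf w ∨ N.IsolatedRetic w ∨ N.isRedund w)
    (hS : ∀ ℓ ∈ S, N.isLeaf ℓ) :
    ∀ w, Reach N u S w → (∃ ℓ ∈ S, ReflTransGen N.E w ℓ) ∨ N.Dominates u w := by
  by_cases hur : u = N.root
  · intro w _; right; rw [hur]; exact aux_dom_root N w
  intro w
  induction w using WellFounded.induction (aux_wf N) with
  | _ w IH =>
  intro hw
  have hB : ReflTransGen N.E u w := reach_below N u S hw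
  by_cases htw : N.isTreeN w
  · right; exact aux_key N hu hexp htw hB
  by_cases hrw : N.isRetic w
  · -- reticulate case
    by_cases hl : ∃ ℓ ∈ S, ReflTransGen N.E w ℓ
    · left; exact hl
    right
    have hwu : w ≠ u := by rintro rfl; exact htw hu
    have hiso : N.IsolatedRetic w := by
      have hnotτ : w ∉ N.treeComp u := fun h => htw (aux_mem_treeComp_tree N hu h)
      rcases hexp w ⟨u, ReflTransGen.refl, rtg_ne hB (Ne.symm hwu)⟩ hnotτ with h | h | h
      · have h1 : 2 ≤ indeg N.E w := hrw
        have := h.1; omega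
      · exact h
      · have h1 : 2 ≤ indeg N.E w := hrw
        have := h.1; omega
    have hwroot : w ≠ N.root := aux_retic_ne_root N hrw
    cases hw with
    | base => exact absurd hu htw
    | step _ _ hnr => exact absurd hrw hnr
    | ron _ _ _ hl' => exact absurd hl' hl
    | off hr hex hall =>
      apply aux_dom_of_parents N hwroot
      intro p hp
      have hrp : Reach N u S p := hall p hp
      have hpnr : ¬ N.isRetic p := hiso.2.1 p hp
      have hpB : ReflTransGen N.E u p := reach_below N u S hrp
      have hproot : p ≠ N.root := by
        rintro rfl
        exact N.acyclic u ((rtg_ne hpB hur).trans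
          (rtg_ne (N.reachable u) (fun h => hur h.symm)))
      by_cases hpt : N.isTreeN p
      · exact aux_key N hu hexp hpt hpB
      · -- p is redundant: outdeg = 1, unique child w
        have hpind : indeg N.E p = 1 := aux_indeg_one N hproot hpnr
        have hpout0 : outdeg N.E p ≠ 0 := fun h0 => aux_no_child N h0 w hp
        have hpout1 : outdeg N.E p = 1 := by
          by_contra hne
          exact hpt (Or.inr ⟨hpind, by omega⟩)
        rcases IH p hp hrp with ⟨ℓ, hℓS, hℓp⟩ | hdom
        · exfalso
          apply hl
          have hpℓ : p ≠ ℓ := by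
            rintro rfl
            have h1 := (hS _ hℓS).2
            omega
          rcases hℓp.cases_head with heq | ⟨c, hc, hcl⟩
          · exact absurd heq hpℓ
          · have hcw : c = w := (aux_child_unique N hpout1 hc hp)
            exact ⟨ℓ, hℓS, hcw ▸ hcl⟩
        · exact hdom
  · -- w is a leaf or redundant node (not tree, not retic)
    have hwu : w ≠ u := by rintro rfl; exact htw hu
    have hwroot : w ≠ N.root := fun h => htw (Or.inl h)
    have hwind : indeg N.E w = 1 := aux_indeg_one N hwroot hrw
    obtain ⟨q, hq, hrq⟩ : ∃ q, N.E q w ∧ Reach N u S q := by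
      cases hw with
      | base => exact absurd hu htw
      | step hz hE _ => exact ⟨_, hE, hz⟩
      | ron hz hE _ _ => exact ⟨_, hE, hz⟩
      | off hr _ _ => exact absurd hr hrw
    have hdomq : N.Dominates u q → N.Dominates u w := by
      intro hd
      apply aux_dom_of_parents N hwroot
      intro p hp
      rw [aux_parent_unique N hwind hp hq]; exact hd
    rcases IH q hq hrq with ⟨ℓ, hℓS, hℓq⟩ | hdom
    · by_cases hq1 : outdeg N.E q = 1
      · left
        have hqℓ : q ≠ ℓ := by
          rintro rfl
          have h1 := (hS _ hℓS).2
          omega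
        rcases hℓq.cases_head with heq | ⟨c, hc, hcl⟩
        · exact absurd heq hqℓ
        · have hcw : c = w := aux_child_unique N hq1 hc hq
          exact ⟨ℓ, hℓS, hcw ▸ hcl⟩
      · right
        apply hdomq
        have hqB : ReflTransGen N.E u q := reach_below N u S hrq
        by_cases hqroot : q = N.root
        · exact aux_key N hu hexp (Or.inl hqroot) hqB
        · have hqnr : ¬ N.isRetic q := fun hr => hq1 (aux_retic_outdeg N hr)
          have hqind : indeg N.E q = 1 := aux_indeg_one N hqroot hqnr
          have hqout0 : outdeg N.E q ≠ 0 := fun h0 => aux_no_child N h0 w hq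
          exact aux_key N hu hexp (Or.inr ⟨hqind, by omega⟩) hqB
    · right; exact hdomq hdom

end MainClaim
/-- Let `u` be a tree node in an exposed tree-node component (every node
strictly below the component is a leaf, an isolated reticulate node, or a redundant node).
Then a set `S` of leaves is displayed as a softwired cluster at `u` iff every leaf in `S` is
below `u` and no leaf outside `S` is dominated by `u`. -/
theorem stmt17 [Fintype V] (N : RPN V) (u : V) (hu : N.isTreeN u)
    (hexp : ∀ w, (∃ t ∈ N.treeComp u, Relation.TransGen N.E t w) → w ∉ N.treeComp u →
      N.isLeaf w ∨ N.IsolatedRetic w ∨ N.isRedund w)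
    (S : Set V) (hS : ∀ ℓ ∈ S, N.isLeaf ℓ) :
    N.DisplayedAt S u ↔
      ((∀ ℓ ∈ S, Relation.TransGen N.E u ℓ) ∧
       (∀ ℓ, N.isLeaf ℓ → ℓ ∉ S → ¬ N.Dominates u ℓ)) := by
  constructor
  · rintro ⟨s, hs, hset⟩
    constructor
    · intro ℓ hℓ
      rw [← hset] at hℓ
      obtain ⟨hleaf, hspan⟩ := hℓ
      have hE : Relation.ReflTransGen N.E u ℓ := ReflTransGen.mono (fun _ _ h => h.1) _ _ hspan
      exact rtg_ne hE (aux_tree_ne_leaf N hu hleaf)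
    · intro ℓ hleaf hℓS hdom
      obtain ⟨p, hp⟩ := span_root_path N s hs ℓ
      have hpE : IsDirPathE N.E N.root ℓ p := path_mono (fun _ _ h => h.1) hp
      have hup : u ∈ p := hdom p hpE
      obtain ⟨l', hl'⟩ := path_suffix hp hup
      have hmem : ℓ ∈ {ℓ' | N.isLeaf ℓ' ∧ Relation.ReflTransGen (N.SpanE s) u ℓ'} :=
        ⟨hleaf, path_to_rtg hl'⟩
      rw [hset] at hmem
      exact hℓS hmem
  · rintro ⟨h1, h2⟩
    refine ⟨sw N u S, fun v hv => sw_parent N u S (aux_retic_parent N hv), ?_⟩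
    ext ℓ
    simp only [Set.mem_setOf_eq]
    constructor
    · rintro ⟨hleaf, hspan⟩
      have hr := span_to_reach N u S hspan
      rcases reach_dom N hu hexp hS ℓ hr with ⟨ℓ', hℓ'S, hℓ'⟩ | hdom
      · rcases hℓ'.cases_head with heq | ⟨c, hc, _⟩
        · rw [heq]; exact hℓ'S
        · exact absurd hc (aux_no_child N hleaf.2 c)
      · by_contra hns
        exact h2 ℓ hleaf hns hdom
    · intro hℓ
      have hleaf := hS ℓ hℓ
      have hreach : Reach N u S ℓ :=
        reach_of_S N u S (h1 ℓ hℓ).to_reflTransGen ⟨ℓ, hℓ, Relation.ReflTransGen.refl⟩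
      exact ⟨hleaf, reach_to_span N u S hreach⟩
end

section
/- In a rooted phylogenetic network with no redundant nodes, the number of tree-node components other than the one containing the root is at most the number of reticulation components, since the root of each non-root tree-node component is the child of the lowest reticulate node of a distinct reticulation component. -/
open Relation

variable {V : Type*}

section AuxLemmas

variable {V : Type*} [Fintype V]

lemma retic_outdeg_one (N : RPN V) {r : V} (hr : N.isRetic r) :
    outdeg N.E r = 1 := by
  have hroot : r ≠ N.root := by
    intro h
    rw [h, RPN.isRetic, N.root_indeg] at hr
    omega
  rcases N.degree_cond r hroot with h | h
  · exact absurd hr (by rw [RPN.isRetic, h]; omega)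
  · exact h

lemma child_unique (N : RPN V) {r a b : V} (h : outdeg N.E r = 1)
    (ha : N.E r a) (hb : N.E r b) : a = b := by
  obtain ⟨x, hx⟩ := Set.ncard_eq_one.mp h
  have ha' : a ∈ {w | N.E r w} := ha
  have hb' : b ∈ {w | N.E r w} := hb
  rw [hx] at ha' hb'
  rw [ha', hb']

/-- Any node with a non-reticulate child reached along a path inside a reticulation
component is either the start or has a directed path back to the start. -/
lemma low_reach (N : RPN V) {r1 u1 : V} (h1 : N.E r1 u1) (hu1 : ¬ N.isRetic u1) :
    ∀ r, Relation.ReflTransGen N.reticAdj r1 r → r = r1 ∨ Relation.TransGen N.E r r1 := by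
  intro r h
  induction h with
  | refl => exact Or.inl rfl
  | @tail b c hb step ih =>
    obtain ⟨hbret, hcret, hE | hE⟩ := step
    · -- E b c : c is the unique child of b
      have hout : outdeg N.E b = 1 := retic_outdeg_one N hbret
      rcases ih with rfl | htg
      · exact absurd ((child_unique N hout hE h1) ▸ hcret) hu1
      · obtain ⟨m, hbm, hmr⟩ := Relation.TransGen.head'_iff.mp htg
        have hmc : m = c := child_unique N hout hbm hE
        rw [hmc] at hmr
        rcases Relation.reflTransGen_iff_eq_or_transGen.mp hmr with h' | h'
        · exact Or.inl h'.symm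
        · exact Or.inr h'
    · -- E c b
      right
      rcases ih with rfl | htg
      · exact Relation.TransGen.single hE
      · exact Relation.TransGen.head hE htg

lemma low_eq (N : RPN V) {r1 r2 u1 u2 : V}
    (h12 : Relation.ReflTransGen N.reticAdj r1 r2)
    (h1 : N.E r1 u1) (hu1 : ¬ N.isRetic u1)
    (h2 : N.E r2 u2) (hu2 : ¬ N.isRetic u2) : r1 = r2 := by
  have hsymm : Symmetric N.reticAdj := fun a b h => ⟨h.2.1, h.1, h.2.2.symm⟩
  have h21 : Relation.ReflTransGen N.reticAdj r2 r1 :=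
    by haveI : Std.Symm N.reticAdj := ⟨hsymm⟩; exact Std.Symm.symm _ _ h12
  rcases low_reach N h1 hu1 r2 h12 with h | ha
  · exact h.symm
  · rcases low_reach N h2 hu2 r1 h21 with h | hb
    · exact h
    · exact absurd (hb.trans ha) (N.acyclic r1)

/-- Every non-root tree component has a node whose parent is a reticulate node. -/
lemma exists_low (N : RPN V) (hnr : ∀ v, ¬ N.isRedund v) {C : Set V}
    (hC : (∃ u, N.isTreeN u ∧ C = N.treeComp u) ∧ N.root ∉ C) :
    ∃ r u, N.isRetic r ∧ N.E r u ∧ ¬ N.isRetic u ∧ C = N.treeComp u := by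
  obtain ⟨⟨u, hu, rfl⟩, hroot⟩ := hC
  have htree : ∀ v ∈ N.treeComp u, N.isTreeN v := by
    intro v hv
    rcases Relation.ReflTransGen.cases_tail hv with h | ⟨c, _, hadj⟩
    · exact h ▸ hu
    · exact hadj.2.1
  have hwf : WellFounded (Relation.TransGen N.E) := by
    have : IsTrans V (Relation.TransGen N.E) := ⟨fun _ _ _ => Relation.TransGen.trans⟩
    have : IsIrrefl V (Relation.TransGen N.E) := ⟨N.acyclic⟩
    exact Finite.wellFounded_of_trans_of_irrefl _
  obtain ⟨u', hu'C, hmin⟩ := hwf.has_min (N.treeComp u) ⟨u, Relation.ReflTransGen.refl⟩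
  have hu'root : u' ≠ N.root := fun h => hroot (h ▸ hu'C)
  -- u' has a parent p
  rcases Relation.ReflTransGen.cases_tail (N.reachable u') with h | ⟨p, _, hpu⟩
  · exact absurd h hu'root
  -- p is not in the component
  have hpC : p ∉ N.treeComp u := fun hp => hmin p hp (Relation.TransGen.single hpu)
  -- p is not a tree node
  have hpT : ¬ N.isTreeN p := by
    intro hp
    exact hpC (hu'C.tail ⟨htree u' hu'C, hp, Or.inr hpu⟩)
  have hproot : p ≠ N.root := fun h => hpT (Or.inl h)
  -- outdeg p ≥ 1
  have hout1 : 0 < outdeg N.E p := by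
    rw [outdeg, Set.ncard_pos (Set.toFinite _)]
    exact ⟨u', hpu⟩
  -- indeg p ≥ 1
  have hin1 : 0 < indeg N.E p := by
    rcases Relation.ReflTransGen.cases_tail (N.reachable p) with h | ⟨q, _, hqp⟩
    · exact absurd h hproot
    · rw [indeg, Set.ncard_pos (Set.toFinite _)]
      exact ⟨q, hqp⟩
  have hpret : N.isRetic p := by
    rcases N.degree_cond p hproot with hin | hout
    · have hone : outdeg N.E p ≠ 1 := fun h => hnr p ⟨hin, h⟩
      exact absurd (Or.inr ⟨hin, by omega⟩) hpT
    · have hone : indeg N.E p ≠ 1 := fun h => hnr p ⟨h, hout⟩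
      rw [RPN.isRetic]; omega
  -- u' is not reticulate
  have hu'nr : ¬ N.isRetic u' := by
    intro hret
    rcases htree u' hu'C with h | ⟨hin, _⟩
    · exact hu'root h
    · rw [RPN.isRetic, hin] at hret; omega
  refine ⟨p, u', hpret, hpu, hu'nr, ?_⟩
  -- treeComp u = treeComp u'
  have hsymm : Symmetric N.treeAdj := fun a b h => ⟨h.2.1, h.1, h.2.2.symm⟩
  have hu'u : Relation.ReflTransGen N.treeAdj u' u :=
    by haveI : Std.Symm N.treeAdj := ⟨hsymm⟩; exact Std.Symm.symm _ _ hu'C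
  ext v
  exact ⟨fun hv => hu'u.trans hv, fun hv => hu'C.trans hv⟩

end AuxLemmas

/-- In a network with no redundant nodes, the number of tree-node components
other than the one containing the root is at most the number of reticulation components. -/
theorem stmt18 [Fintype V] (N : RPN V) (hnr : ∀ v, ¬ N.isRedund v) :
    Set.ncard {C : Set V | (∃ u, N.isTreeN u ∧ C = N.treeComp u) ∧ N.root ∉ C}
      ≤ Set.ncard {C : Set V | ∃ u, N.isRetic u ∧ C = N.reticComp u} := by
  classical
  set D := {C : Set V | (∃ u, N.isTreeN u ∧ C = N.treeComp u) ∧ N.root ∉ C} with hD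
  have key : ∀ C ∈ D, ∃ r u, N.isRetic r ∧ N.E r u ∧ ¬ N.isRetic u ∧ C = N.treeComp u :=
    fun C hC => exists_low N hnr hC
  have : Nonempty V := ⟨N.root⟩
  choose! r u hret hE hnret hcomp using key
  apply Set.ncard_le_ncard_of_injOn (fun C => N.reticComp (r C))
  · intro C hC
    exact ⟨r C, hret C hC, rfl⟩
  · intro C1 h1 C2 h2 heq
    have heq' : N.reticComp (r C1) = N.reticComp (r C2) := heq
    have hr12 : Relation.ReflTransGen N.reticAdj (r C1) (r C2) := by
      have : r C2 ∈ N.reticComp (r C2) := Relation.ReflTransGen.refl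
      rw [← heq'] at this
      exact this
    have hrr : r C1 = r C2 :=
      low_eq N hr12 (hE C1 h1) (hnret C1 h1) (hE C2 h2) (hnret C2 h2)
    have huu : u C1 = u C2 :=
      child_unique N (retic_outdeg_one N (hret C1 h1)) (hE C1 h1) (hrr ▸ hE C2 h2)
    rw [hcomp C1 h1, hcomp C2 h2, huu]
end

section
/- In a rooted phylogenetic network with no redundant nodes that has n leaves, the number of reticulation components is at most n + p − 1, where p is the number of tree-node components, because the unique child of the lowest reticulate node of each reticulation component is either a leaf or the root of a non-root tree-node component, and this assignment is injective. -/
open Relation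

variable {V : Type*}

namespace RPN

variable [Fintype V] (N : RPN V)

lemma not_edge_root {u : V} (h : N.E u N.root) : False := by
  have h1 : 0 < indeg N.E N.root := by
    rw [indeg, Set.ncard_pos (Set.toFinite _)]; exact ⟨u, h⟩
  rw [N.root_indeg] at h1; omega

lemma indeg_one_of_edge {u v : V} (hE : N.E u v) (h : ¬ N.isRetic v) : indeg N.E v = 1 := by
  have h1 : 0 < indeg N.E v := by
    rw [indeg, Set.ncard_pos (Set.toFinite _)]; exact ⟨u, hE⟩
  have h2 : ¬ 2 ≤ indeg N.E v := h
  omega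

lemma parent_eq {u u' v : V} (h : indeg N.E v = 1) (h1 : N.E u v) (h2 : N.E u' v) : u = u' := by
  rw [indeg, Set.ncard_eq_one] at h
  obtain ⟨a, ha⟩ := h
  have e1 : u ∈ {w | N.E w v} := h1
  have e2 : u' ∈ {w | N.E w v} := h2
  rw [ha] at e1 e2
  exact e1.trans e2.symm

lemma retic_ne_root {v : V} (h : N.isRetic v) : v ≠ N.root := by
  intro hv
  have : (2 : ℕ) ≤ 0 := by rw [hv] at h; rw [← N.root_indeg]; exact h
  omega

lemma retic_outdeg {v : V} (h : N.isRetic v) : outdeg N.E v = 1 := by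
  rcases N.degree_cond v (N.retic_ne_root h) with h1 | h1
  · exact absurd h (by rw [isRetic, h1]; omega)
  · exact h1

lemma not_treeN_of_retic {v : V} (h : N.isRetic v) : ¬ N.isTreeN v := by
  rintro (hv | hv)
  · exact N.retic_ne_root h hv
  · have := h; rw [isRetic, hv.1] at this; omega

lemma child_eq {v c c' : V} (h : outdeg N.E v = 1) (h1 : N.E v c) (h2 : N.E v c') : c = c' := by
  rw [outdeg, Set.ncard_eq_one] at h
  obtain ⟨a, ha⟩ := h
  have e1 : c ∈ {w | N.E v w} := h1
  have e2 : c' ∈ {w | N.E v w} := h2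
  rw [ha] at e1 e2
  exact e1.trans e2.symm

lemma exists_child {v : V} (h : outdeg N.E v = 1) : ∃ c, N.E v c := by
  have : 0 < outdeg N.E v := by omega
  rw [outdeg, Set.ncard_pos (Set.toFinite _)] at this
  exact this

lemma wf_up : WellFounded (fun a b : V => N.E a b) := by
  have h : WellFounded (Relation.TransGen N.E) := by
    letI : IsTrans V (Relation.TransGen N.E) := ⟨fun _ _ _ h1 h2 => h1.trans h2⟩
    letI : IsIrrefl V (Relation.TransGen N.E) := ⟨N.acyclic⟩
    exact Finite.wellFounded_of_trans_of_irrefl _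
  exact Subrelation.wf (fun h => Relation.TransGen.single h) h

lemma wf_down : WellFounded (fun a b : V => N.E b a) := by
  have h : WellFounded (Relation.TransGen (Function.swap N.E)) := by
    letI : IsTrans V (Relation.TransGen (Function.swap N.E)) := ⟨fun _ _ _ h1 h2 => h1.trans h2⟩
    letI : IsIrrefl V (Relation.TransGen (Function.swap N.E)) :=
      ⟨fun a ha => N.acyclic a (Relation.transGen_swap.mp ha)⟩
    exact Finite.wellFounded_of_trans_of_irrefl _
  exact @Subrelation.wf V (Relation.TransGen (Function.swap N.E)) (fun a b : V => N.E b a)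
    (fun {x y} hab => Relation.TransGen.single (show Function.swap N.E x y from hab)) h

open Classical in
/-- Climb to the top of a tree-node component. -/
noncomputable def climb : V → V :=
  (N.wf_up).fix (fun v rec =>
    if h : ∃ u, (N.E u v ∧ N.isTreeN u) ∧ N.isTreeN v then rec h.choose h.choose_spec.1.1 else v)

open Classical in
lemma climb_eq (v : V) : N.climb v =
    if h : ∃ u, (N.E u v ∧ N.isTreeN u) ∧ N.isTreeN v then N.climb h.choose else v := by
  rw [climb, WellFounded.fix_eq]

lemma climb_fixed {t : V} (h : ¬ ∃ u, N.E u t ∧ N.isTreeN u) : N.climb t = t := by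
  rw [climb_eq, dif_neg]
  rintro ⟨u, ⟨hE, hu⟩, _⟩
  exact h ⟨u, hE, hu⟩

lemma climb_spec : ∀ v, N.isTreeN v → N.isTreeN (N.climb v) ∧
    Relation.ReflTransGen N.treeAdj (N.climb v) v ∧
    ¬ ∃ u, N.E u (N.climb v) ∧ N.isTreeN u := by
  intro v
  induction v using (N.wf_up).induction with
  | _ v ih =>
    intro hv
    rw [climb_eq]
    split_ifs with h
    · obtain ⟨⟨hE, hu⟩, _⟩ := h.choose_spec
      obtain ⟨h1, h2, h3⟩ := ih h.choose hE hu
      exact ⟨h1, h2.tail ⟨hu, hv, Or.inl hE⟩, h3⟩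
    · exact ⟨hv, Relation.ReflTransGen.refl, fun ⟨u, hE, hu⟩ => h ⟨u, ⟨hE, hu⟩, hv⟩⟩

lemma climb_edge {u v : V} (hu : N.isTreeN u) (hv : N.isTreeN v) (hE : N.E u v) :
    N.climb v = N.climb u := by
  have h : ∃ w, (N.E w v ∧ N.isTreeN w) ∧ N.isTreeN v := ⟨u, ⟨hE, hu⟩, hv⟩
  rw [climb_eq, dif_pos h]
  obtain ⟨⟨hE', _⟩, _⟩ := h.choose_spec
  have hroot : v ≠ N.root := fun hr => N.not_edge_root (hr ▸ hE)
  have hdeg : indeg N.E v = 1 := by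
    rcases hv with hv | hv
    · exact absurd hv hroot
    · exact hv.1
  rw [N.parent_eq hdeg hE' hE]

lemma climb_adj {u v : V} (h : N.treeAdj u v) : N.climb u = N.climb v := by
  obtain ⟨hu, hv, hE | hE⟩ := h
  · exact (N.climb_edge hu hv hE).symm
  · exact N.climb_edge hv hu hE

lemma climb_rtg {u v : V} (h : Relation.ReflTransGen N.treeAdj u v) :
    N.climb u = N.climb v := by
  induction h with
  | refl => rfl
  | tail _ hadj ih => exact ih.trans (N.climb_adj hadj)

open Classical in
/-- Descend to the lowest node of a reticulation component. -/
noncomputable def sink : V → V :=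
  (N.wf_down).fix (fun v rec =>
    if h : ∃ c, (N.E v c ∧ N.isRetic c) ∧ N.isRetic v then rec h.choose h.choose_spec.1.1 else v)

open Classical in
lemma sink_eq (v : V) : N.sink v =
    if h : ∃ c, (N.E v c ∧ N.isRetic c) ∧ N.isRetic v then N.sink h.choose else v := by
  rw [sink, WellFounded.fix_eq]

lemma sink_spec : ∀ v, N.isRetic v → N.isRetic (N.sink v) ∧
    Relation.ReflTransGen N.reticAdj v (N.sink v) ∧
    ¬ ∃ c, N.E (N.sink v) c ∧ N.isRetic c := by
  intro v
  induction v using (N.wf_down).induction with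
  | _ v ih =>
    intro hv
    rw [sink_eq]
    split_ifs with h
    · obtain ⟨⟨hE, hc⟩, _⟩ := h.choose_spec
      obtain ⟨h1, h2, h3⟩ := ih h.choose hE hc
      exact ⟨h1, Relation.ReflTransGen.head ⟨hv, hc, Or.inl hE⟩ h2, h3⟩
    · exact ⟨hv, Relation.ReflTransGen.refl, fun ⟨c, hE, hc⟩ => h ⟨c, ⟨hE, hc⟩, hv⟩⟩

lemma sink_edge {u v : V} (hu : N.isRetic u) (hv : N.isRetic v) (hE : N.E u v) :
    N.sink u = N.sink v := by
  have h : ∃ c, (N.E u c ∧ N.isRetic c) ∧ N.isRetic u := ⟨v, ⟨hE, hv⟩, hu⟩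
  rw [sink_eq, dif_pos h]
  obtain ⟨⟨hE', _⟩, _⟩ := h.choose_spec
  rw [N.child_eq (N.retic_outdeg hu) hE' hE]

lemma sink_adj {u v : V} (h : N.reticAdj u v) : N.sink u = N.sink v := by
  obtain ⟨hu, hv, hE | hE⟩ := h
  · exact N.sink_edge hu hv hE
  · exact (N.sink_edge hv hu hE).symm

lemma sink_rtg {u v : V} (h : Relation.ReflTransGen N.reticAdj u v) :
    N.sink u = N.sink v := by
  induction h with
  | refl => rfl
  | tail _ hadj ih => exact ih.trans (N.sink_adj hadj)

lemma reticAdj_symm : Symmetric N.reticAdj := fun _ _ ⟨a, b, c⟩ => ⟨b, a, c.symm⟩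

lemma reticComp_congr {u v : V} (h : Relation.ReflTransGen N.reticAdj u v) :
    N.reticComp u = N.reticComp v := by
  haveI : Std.Symm N.reticAdj := ⟨fun a b hab => N.reticAdj_symm hab⟩
  have hs : ∀ {a b : V}, ReflTransGen N.reticAdj a b → ReflTransGen N.reticAdj b a :=
    fun {a b} hab => (Relation.ReflTransGen.symmetric : Std.Symm (ReflTransGen N.reticAdj)).symm a b hab
  ext x
  exact ⟨fun hx => Relation.ReflTransGen.trans (hs h) hx,
         fun hx => Relation.ReflTransGen.trans h hx⟩

open Classical in
/-- The unique child of a node (junk value if no child). -/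
noncomputable def gchild (v : V) : V :=
  if h : ∃ c, N.E v c then h.choose else v

lemma gchild_edge {v : V} (h : outdeg N.E v = 1) : N.E v (N.gchild v) := by
  have he := N.exists_child h
  rw [gchild, dif_pos he]
  exact he.choose_spec

open Classical in
/-- The injection from reticulation components. -/
noncomputable def rmap (C : Set V) : V ⊕ Set V :=
  if h : ∃ u, N.isRetic u ∧ C = N.reticComp u then
    (if N.isLeaf (N.gchild (N.sink h.choose)) then Sum.inl (N.gchild (N.sink h.choose))
     else Sum.inr (N.treeComp (N.gchild (N.sink h.choose))))
  else Sum.inr ∅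

lemma key (hnr : ∀ v, ¬ N.isRedund v) {C : Set V}
    (h : ∃ u, N.isRetic u ∧ C = N.reticComp u) :
    ∃ r c, N.isRetic r ∧ N.E r c ∧ indeg N.E c = 1 ∧ c ≠ N.root ∧
      C = N.reticComp r ∧
      (N.isLeaf c → N.rmap C = Sum.inl c) ∧
      (¬ N.isLeaf c →
        N.rmap C = Sum.inr (N.treeComp c) ∧ N.isTreeN c ∧ N.climb c = c) := by
  classical
  obtain ⟨hu, hC⟩ := h.choose_spec
  obtain ⟨hr, hrtg, hlow⟩ := N.sink_spec h.choose hu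
  have hE : N.E (N.sink h.choose) (N.gchild (N.sink h.choose)) :=
    N.gchild_edge (N.retic_outdeg hr)
  have hcnr : ¬ N.isRetic (N.gchild (N.sink h.choose)) := fun hc => hlow ⟨_, hE, hc⟩
  have hdeg : indeg N.E (N.gchild (N.sink h.choose)) = 1 := N.indeg_one_of_edge hE hcnr
  have hcroot : N.gchild (N.sink h.choose) ≠ N.root := fun hc => N.not_edge_root (hc ▸ hE)
  refine ⟨N.sink h.choose, N.gchild (N.sink h.choose), hr, hE, hdeg, hcroot,
    hC.trans (N.reticComp_congr hrtg), ?_, ?_⟩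
  · intro hlf
    rw [rmap, dif_pos h, if_pos hlf]
  · intro hnl
    have hout0 : outdeg N.E (N.gchild (N.sink h.choose)) ≠ 0 := fun h0 => hnl ⟨hdeg, h0⟩
    have hout1 : outdeg N.E (N.gchild (N.sink h.choose)) ≠ 1 := fun h1 => hnr _ ⟨hdeg, h1⟩
    have htc : N.isTreeN (N.gchild (N.sink h.choose)) := Or.inr ⟨hdeg, by omega⟩
    refine ⟨by rw [rmap, dif_pos h, if_neg hnl], htc, N.climb_fixed ?_⟩
    rintro ⟨w, hwE, hw⟩
    rw [N.parent_eq hdeg hwE hE] at hw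
    exact N.not_treeN_of_retic hr hw

end RPN

/-- In a network with no redundant nodes, with `n` leaves and `p` tree-node
components, the number `q` of reticulation components satisfies `q ≤ n + p - 1`. -/
theorem stmt19 [Fintype V] (N : RPN V) (hnr : ∀ v, ¬ N.isRedund v) (n p q : ℕ)
    (hn : n = Set.ncard {v | N.isLeaf v})
    (hp : p = Set.ncard {C : Set V | ∃ u, N.isTreeN u ∧ C = N.treeComp u})
    (hq : q = Set.ncard {C : Set V | ∃ u, N.isRetic u ∧ C = N.reticComp u}) :
    q ≤ n + p - 1 := by
  classical
  set L : Set V := {v | N.isLeaf v} with hL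
  set T : Set (Set V) := {C : Set V | ∃ u, N.isTreeN u ∧ C = N.treeComp u} with hT
  set R : Set (Set V) := {C : Set V | ∃ u, N.isRetic u ∧ C = N.reticComp u} with hR
  have hrootmem : N.treeComp N.root ∈ T := ⟨N.root, Or.inl rfl, rfl⟩
  have hclimbroot : N.climb N.root = N.root :=
    N.climb_fixed (fun ⟨u, hE, _⟩ => N.not_edge_root hE)
  -- the target set
  set tgt : Set (V ⊕ Set V) :=
    Sum.inl '' L ∪ Sum.inr '' (T \ {N.treeComp N.root}) with htgt
  have hmaps : ∀ C ∈ R, N.rmap C ∈ tgt := by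
    intro C hC
    obtain ⟨r, c, hr, hE, hdeg, hcroot, hCr, hlf, hnlf⟩ := N.key hnr hC
    by_cases hleaf : N.isLeaf c
    · rw [hlf hleaf]
      exact Or.inl ⟨c, hleaf, rfl⟩
    · obtain ⟨hrm, htc, hcl⟩ := hnlf hleaf
      rw [hrm]
      refine Or.inr ⟨N.treeComp c, ⟨⟨c, htc, rfl⟩, ?_⟩, rfl⟩
      intro hmemeq
      rw [Set.mem_singleton_iff] at hmemeq
      have hroot' : N.root ∈ N.treeComp c := by
        rw [hmemeq]; exact Relation.ReflTransGen.refl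
      have := N.climb_rtg hroot'
      rw [hcl, hclimbroot] at this
      exact hcroot this
  have hinj : Set.InjOn N.rmap R := by
    intro C1 h1 C2 h2 heq
    obtain ⟨r1, c1, hr1, hE1, hdeg1, hcroot1, hC1, hlf1, hnlf1⟩ := N.key hnr h1
    obtain ⟨r2, c2, hr2, hE2, hdeg2, hcroot2, hC2, hlf2, hnlf2⟩ := N.key hnr h2
    have hc12 : c1 = c2 := by
      by_cases hl1 : N.isLeaf c1 <;> by_cases hl2 : N.isLeaf c2
      · rw [hlf1 hl1, hlf2 hl2] at heq
        exact Sum.inl.inj heq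
      · rw [hlf1 hl1, (hnlf2 hl2).1] at heq
        exact absurd heq (by simp)
      · rw [(hnlf1 hl1).1, hlf2 hl2] at heq
        exact absurd heq (by simp)
      · obtain ⟨hrm1, htc1, hcl1⟩ := hnlf1 hl1
        obtain ⟨hrm2, htc2, hcl2⟩ := hnlf2 hl2
        rw [hrm1, hrm2] at heq
        have hcc : N.treeComp c1 = N.treeComp c2 := Sum.inr.inj heq
        have hmem : c2 ∈ N.treeComp c1 := by
          rw [hcc]; exact Relation.ReflTransGen.refl
        have := N.climb_rtg hmem
        rw [hcl1, hcl2] at this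
        exact this
    subst hc12
    have : r1 = r2 := N.parent_eq hdeg1 hE1 hE2
    rw [hC1, hC2, this]
  have hle : R.ncard ≤ tgt.ncard :=
    Set.ncard_le_ncard_of_injOn N.rmap hmaps hinj (Set.toFinite _)
  have hunion : tgt.ncard ≤ (Sum.inl '' L : Set (V ⊕ Set V)).ncard +
      (Sum.inr '' (T \ {N.treeComp N.root}) : Set (V ⊕ Set V)).ncard :=
    Set.ncard_union_le _ _
  have h1 : (Sum.inl '' L : Set (V ⊕ Set V)).ncard = L.ncard :=
    Set.ncard_image_of_injective _ Sum.inl_injective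
  have h2 : (Sum.inr '' (T \ {N.treeComp N.root}) : Set (V ⊕ Set V)).ncard =
      (T \ {N.treeComp N.root}).ncard :=
    Set.ncard_image_of_injective _ Sum.inr_injective
  have h3 : (T \ {N.treeComp N.root}).ncard = T.ncard - 1 :=
    Set.ncard_diff_singleton_of_mem hrootmem
  have hp1 : 1 ≤ T.ncard := by
    rw [Nat.one_le_iff_ne_zero, ← Nat.pos_iff_ne_zero,
      Set.ncard_pos (Set.toFinite _)]
    exact ⟨_, hrootmem⟩
  rw [hq, hp, hn]
  rw [h1, h2, h3] at hunion
  omega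
end
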